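/- Let $p,q,r,\gamma,\gamma',\gamma''$ satisfy the Kovalevskaya differential system of §2. Setting $x_1 = p+qi$, $y_1 = \gamma + \gamma'i$, then $2i\,dx_1/dt = r x_1 + c_0 \gamma''$ and $d/dt\big(x_1^2 + c_0 y_1\big) = -ri\big(x_1^2 + c_0 y_1\big)$. -/

import Mathlib

open Complex

theorem stmt_7 (c₀ : ℂ) (p q r γ γ' γ'' : ℝ → ℂ)
    (hp : ∀ t, HasDerivAt p (q t * r t / 2) t)
    (hq : ∀ t, HasDerivAt q ((-(p t * r t) - c₀ * γ'' t) / 2) t)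
    (hr : ∀ t, HasDerivAt r (c₀ * γ' t) t)
    (hγ : ∀ t, HasDerivAt γ (r t * γ' t - q t * γ'' t) t)
    (hγ' : ∀ t, HasDerivAt γ' (p t * γ'' t - r t * γ t) t)
    (hγ'' : ∀ t, HasDerivAt γ'' (q t * γ t - p t * γ' t) t) :
    ∀ t : ℝ,
      HasDerivAt (fun t => p t + q t * I)
        ((r t * (p t + q t * I) + c₀ * γ'' t) / (2 * I)) t ∧
      HasDerivAt (fun t => (p t + q t * I) ^ 2 + c₀ * (γ t + γ' t * I))
        (-(r t) * I * ((p t + q t * I) ^ 2 + c₀ * (γ t + γ' t * I))) t := by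
  intro t
  have hI : (I:ℂ) * I = -1 := Complex.I_mul_I
  have hI0 : (I:ℂ) ≠ 0 := Complex.I_ne_zero
  have h1 : HasDerivAt (fun t => p t + q t * I)
      (q t * r t / 2 + (-(p t * r t) - c₀ * γ'' t) / 2 * I) t :=
    (hp t).add ((hq t).mul_const I)
  have e1 : q t * r t / 2 + (-(p t * r t) - c₀ * γ'' t) / 2 * I
      = (r t * (p t + q t * I) + c₀ * γ'' t) / (2 * I) := by
    have hI2 : (I:ℂ)^2 = -1 := Complex.I_sq
    field_simp
    linear_combination (-(r t * p t) - c₀ * γ'' t) * hI2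
  have h2 : HasDerivAt (fun t => (p t + q t * I) ^ 2 + c₀ * (γ t + γ' t * I))
      (2 * (p t + q t * I) * (q t * r t / 2 + (-(p t * r t) - c₀ * γ'' t) / 2 * I)
        + c₀ * ((r t * γ' t - q t * γ'' t) + (p t * γ'' t - r t * γ t) * I)) t := by
    have ha : HasDerivAt (fun t => (p t + q t * I) ^ 2)
        ((q t * r t / 2 + (-(p t * r t) - c₀ * γ'' t) / 2 * I) * (p t + q t * I)
          + (p t + q t * I) * (q t * r t / 2 + (-(p t * r t) - c₀ * γ'' t) / 2 * I)) t := by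
      have hm := h1.mul h1
      simp only [pow_two]
      exact hm
    have hb := ((hγ t).add ((hγ' t).mul_const I)).const_mul c₀
    have := ha.add hb
    refine this.congr_deriv ?_
    ring
  have e2 : 2 * (p t + q t * I) * (q t * r t / 2 + (-(p t * r t) - c₀ * γ'' t) / 2 * I)
        + c₀ * ((r t * γ' t - q t * γ'' t) + (p t * γ'' t - r t * γ t) * I)
      = -(r t) * I * ((p t + q t * I) ^ 2 + c₀ * (γ t + γ' t * I)) := by
    have hI2 : (I:ℂ)^2 = -1 := Complex.I_sq
    linear_combination (p t * q t * r t - q t * c₀ * γ'' t + q t^2 * I * r t + r t * c₀ * γ' t) * hI2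
  exact ⟨e1 ▸ h1, e2 ▸ h2⟩
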